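/- Fix p ∈ ℝ. For each integer n ≥ 1 let μ_n := Measure.map (fun x => Real.sqrt n · Real.log x) (GIG(p; n, n)), a Borel probability measure on ℝ. Then as n → ∞, μ_n converges weakly (i.e. in distribution, in the topology of ProbabilityMeasure ℝ) to the standard Gaussian measure gaussianReal 0 1. -/

import Mathlib

open MeasureTheory ProbabilityTheory Filter Real

/-- Unnormalized density of the generalized inverse Gaussian distribution `GIG(p; a, b)`. -/
noncomputable def gigDensity (p a b : ℝ) (x : ℝ) : ENNReal :=
  if 0 < x then ENNReal.ofReal (x ^ (p - 1) * Real.exp (-(a * x + b / x) / 2)) else 0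

/-- The (scalar) generalized inverse Gaussian distribution `GIG(p; a, b)`. -/
noncomputable def GIG (p a b : ℝ) : Measure ℝ :=
  ((volume.withDensity (gigDensity p a b)) Set.univ)⁻¹ • volume.withDensity (gigDensity p a b)

noncomputable def DR (p a : ℝ) (x : ℝ) : ℝ :=
  if 0 < x then x ^ (p - 1) * Real.exp (-(a * x + a / x) / 2) else 0

noncomputable def HH (p : ℝ) (n : ℕ) (y : ℝ) : ℝ :=
  Real.exp (p * y / Real.sqrt n - n * (Real.cosh (y / Real.sqrt n) - 1))


lemma cosh_identity (t : ℝ) : Real.cosh t = 1 + 2 * Real.sinh (t / 2) ^ 2 := by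
  have h := Real.cosh_two_mul (t / 2)
  have h2 := Real.cosh_sq (t / 2)
  rw [show 2 * (t/2) = t by ring] at h
  rw [h, h2]; ring

lemma cosh_lb (t : ℝ) : 1 + t ^ 2 / 2 ≤ Real.cosh t := by
  rw [cosh_identity]
  have : |t / 2| ≤ Real.sinh |t / 2| := Real.self_le_sinh_iff.mpr (abs_nonneg _)
  have h2 : (t / 2) ^ 2 ≤ Real.sinh (t / 2) ^ 2 := by
    have habs : |Real.sinh (t/2)| = Real.sinh |t/2| := by
      rcases le_or_gt 0 (t/2) with h | h
      · rw [abs_of_nonneg h, abs_of_nonneg (by simpa using Real.sinh_le_sinh.mpr h)]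
      · rw [abs_of_neg h, abs_of_neg (by simpa using Real.sinh_lt_sinh.mpr h), ← Real.sinh_neg]
    rw [← sq_abs (t/2), ← sq_abs (Real.sinh (t/2)), habs]
    exact pow_le_pow_left₀ (abs_nonneg _) this 2
  nlinarith [h2]

lemma HH_le_aux (p : ℝ) {n : ℕ} (hn : 1 ≤ n) (y : ℝ) :
    Real.exp (p * y / Real.sqrt n - n * (Real.cosh (y / Real.sqrt n) - 1))
      ≤ Real.exp (|p| * |y| - y ^ 2 / 2) := by
  have hs1 : (1:ℝ) ≤ Real.sqrt n := by
    rw [show (1:ℝ) = Real.sqrt 1 by simp]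
    exact Real.sqrt_le_sqrt (by exact_mod_cast hn)
  have hs0 : (0:ℝ) < Real.sqrt n := lt_of_lt_of_le one_pos hs1
  apply Real.exp_le_exp.mpr
  have h1 : p * y / Real.sqrt n ≤ |p| * |y| := by
    calc p * y / Real.sqrt n ≤ |p * y / Real.sqrt n| := le_abs_self _
    _ = |p * y| / Real.sqrt n := by rw [abs_div, abs_of_pos hs0]
    _ ≤ |p * y| := div_le_self (abs_nonneg _) hs1
    _ = |p| * |y| := abs_mul _ _
  have h2 : y ^ 2 / 2 ≤ (n : ℝ) * (Real.cosh (y / Real.sqrt n) - 1) := by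
    have := cosh_lb (y / Real.sqrt n)
    have hsq : (y / Real.sqrt n) ^ 2 = y ^ 2 / n := by
      rw [div_pow, Real.sq_sqrt (Nat.cast_nonneg n)]
    have hn0 : (0:ℝ) < n := by exact_mod_cast hn
    rw [hsq] at this
    have := mul_le_mul_of_nonneg_left (by linarith : y ^ 2 / (n:ℝ) / 2 ≤ Real.cosh (y / Real.sqrt n) - 1) hn0.le
    calc y ^ 2 / 2 = (n:ℝ) * (y ^ 2 / n / 2) := by field_simp
    _ ≤ _ := this
  linarith

lemma dom_integrable (p : ℝ) : Integrable (fun y => Real.exp (|p| * |y| - y ^ 2 / 2)) := by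
  have hg : Integrable (fun y : ℝ => Real.exp (-(1/2) * y ^ 2)) := integrable_exp_neg_mul_sq (by norm_num)
  have h1 : Integrable (fun y : ℝ => Real.exp (-(1/2) * (y - |p|) ^ 2)) := by
    simpa using hg.comp_sub_right |p|
  have h2 : Integrable (fun y : ℝ => Real.exp (-(1/2) * (y + |p|) ^ 2)) := by
    simpa using hg.comp_add_right |p|
  have hb : Integrable (fun y : ℝ => Real.exp (p ^ 2 / 2) *
      (Real.exp (-(1/2) * (y - |p|) ^ 2) + Real.exp (-(1/2) * (y + |p|) ^ 2))) :=
    (h1.add h2).const_mul _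
  refine hb.mono' (Continuous.aestronglyMeasurable (by continuity)) (ae_of_all _ fun y => ?_)
  rw [Real.norm_eq_abs, abs_of_pos (Real.exp_pos _)]
  rcases le_or_gt 0 y with hy | hy
  · have : |p| * |y| - y ^ 2 / 2 = p ^ 2 / 2 + (-(1/2) * (y - |p|) ^ 2) := by
      rw [abs_of_nonneg hy, ← sq_abs p]; ring
    rw [this, Real.exp_add]
    have := Real.exp_pos (-(1/2) * (y + |p|) ^ 2)
    nlinarith [Real.exp_pos (p^2/2), Real.exp_pos (-(1/2) * (y - |p|) ^ 2)]
  · have : |p| * |y| - y ^ 2 / 2 = p ^ 2 / 2 + (-(1/2) * (y + |p|) ^ 2) := by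
      rw [abs_of_neg hy, ← sq_abs p]; ring
    rw [this, Real.exp_add]
    nlinarith [Real.exp_pos (p^2/2), Real.exp_pos (-(1/2) * (y - |p|) ^ 2), Real.exp_pos (-(1/2) * (y + |p|) ^ 2)]

lemma HH_le (p : ℝ) {n : ℕ} (hn : 1 ≤ n) (y : ℝ) :
    HH p n y ≤ Real.exp (|p| * |y| - y ^ 2 / 2) := HH_le_aux p hn y

lemma sinh_div_self_tendsto : Tendsto (fun s : ℝ => Real.sinh s / s) (nhdsWithin 0 {0}ᶜ) (nhds 1) := by
  have h : HasDerivAt Real.sinh (Real.cosh 0) 0 := Real.hasDerivAt_sinh 0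
  have := hasDerivAt_iff_tendsto_slope.mp h
  rw [Real.cosh_zero] at this
  refine this.congr' ?_
  filter_upwards [self_mem_nhdsWithin] with s hs
  simp [slope_def_field, Real.sinh_zero]

lemma sqrtn_tendsto : Tendsto (fun n : ℕ => Real.sqrt n) atTop atTop := by
  have h := (tendsto_rpow_atTop (by norm_num : (0:ℝ) < 1/2)).comp
    (tendsto_natCast_atTop_atTop (R := ℝ))
  refine h.congr fun n => ?_
  simp [Function.comp, Real.sqrt_eq_rpow]

lemma HH_tendsto_aux (p y : ℝ) :
    Tendsto (fun n : ℕ => Real.exp (p * y / Real.sqrt n - n * (Real.cosh (y / Real.sqrt n) - 1)))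
      atTop (nhds (Real.exp (-(y ^ 2) / 2))) := by
  rcases eq_or_ne y 0 with rfl | hy
  · simp
  refine (Real.continuous_exp.tendsto _).comp ?_
  have h1 : Tendsto (fun n : ℕ => p * y / Real.sqrt n) atTop (nhds 0) :=
    tendsto_const_nhds.div_atTop sqrtn_tendsto
  have h2 : Tendsto (fun n : ℕ => (n : ℝ) * (Real.cosh (y / Real.sqrt n) - 1)) atTop
      (nhds (y ^ 2 / 2)) := by
    have hs : Tendsto (fun n : ℕ => y / (2 * Real.sqrt n)) atTop (nhdsWithin 0 {0}ᶜ) := by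
      apply tendsto_nhdsWithin_of_tendsto_nhds_of_eventually_within
      · exact tendsto_const_nhds.div_atTop (tendsto_const_nhds.pos_mul_atTop two_pos sqrtn_tendsto)
      · filter_upwards [eventually_ge_atTop 1] with n hn
        have hsn : (0:ℝ) < Real.sqrt n := Real.sqrt_pos.mpr (by exact_mod_cast Nat.pos_of_ne_zero (by omega))
        simp only [Set.mem_compl_iff, Set.mem_singleton_iff]
        exact div_ne_zero hy (by positivity)
    have hmain : Tendsto (fun n : ℕ =>
        y ^ 2 / 2 * (Real.sinh (y / (2 * Real.sqrt n)) / (y / (2 * Real.sqrt n))) ^ 2) atTop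
        (nhds (y ^ 2 / 2)) := by
      have := (sinh_div_self_tendsto.comp hs).pow 2
      simpa using tendsto_const_nhds.mul this
    refine hmain.congr' ?_
    filter_upwards [eventually_ge_atTop 1] with n hn
    have hn0 : (0:ℝ) < n := by exact_mod_cast Nat.pos_of_ne_zero (by omega)
    have hsn : (0:ℝ) < Real.sqrt n := Real.sqrt_pos.mpr hn0
    have hsq : Real.sqrt n ^ 2 = (n:ℝ) := Real.sq_sqrt hn0.le
    rw [cosh_identity]
    have : y / Real.sqrt n / 2 = y / (2 * Real.sqrt n) := by ring
    rw [this]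
    field_simp
    ring_nf
    rw [hsq]
    ring
  have := h1.sub h2
  simpa [neg_div] using this

lemma HH_tendsto (p y : ℝ) :
    Tendsto (fun n : ℕ => HH p n y) atTop (nhds (Real.exp (-(y ^ 2) / 2))) :=
  HH_tendsto_aux p y

lemma HH_continuous (p : ℝ) (n : ℕ) : Continuous (HH p n) := by
  unfold HH; continuity

lemma HH_pos (p : ℝ) (n : ℕ) (y : ℝ) : 0 < HH p n y := Real.exp_pos _

lemma main_tendsto (p : ℝ) (f : BoundedContinuousFunction ℝ ℝ) :
    Tendsto (fun n : ℕ => ∫ y, f y * HH p n y) atTop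
      (nhds (∫ y, f y * Real.exp (-(y ^ 2) / 2))) := by
  apply tendsto_integral_filter_of_dominated_convergence
    (fun y => ‖f‖ * Real.exp (|p| * |y| - y ^ 2 / 2))
  · filter_upwards with n
    exact (f.continuous.mul (HH_continuous p n)).aestronglyMeasurable
  · filter_upwards [eventually_ge_atTop 1] with n hn
    filter_upwards with y
    rw [Real.norm_eq_abs, abs_mul, abs_of_pos (HH_pos p n y)]
    exact mul_le_mul (f.norm_coe_le_norm y) (HH_le p hn y) (HH_pos p n y).le (norm_nonneg f)
  · exact (dom_integrable p).const_mul _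
  · filter_upwards with y
    exact tendsto_const_nhds.mul (HH_tendsto p y)

lemma gauss_int : ∫ y : ℝ, Real.exp (-(y ^ 2) / 2) = Real.sqrt (2 * Real.pi) := by
  have := integral_gaussian (1/2)
  rw [show Real.pi / (1/2) = 2 * Real.pi by ring] at this
  rw [← this]
  congr 1 with y
  ring_nf

lemma denom_pos : 0 < Real.sqrt (2 * Real.pi) := Real.sqrt_pos.mpr (by positivity)

lemma gaussian_integral_eq (f : BoundedContinuousFunction ℝ ℝ) :
    ∫ x, f x ∂(gaussianReal 0 1) = (∫ y, f y * Real.exp (-(y ^ 2) / 2)) / Real.sqrt (2 * Real.pi) := by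
  rw [gaussianReal_of_var_ne_zero 0 one_ne_zero]
  have hmeas : Measurable fun x => (gaussianPDFReal 0 1 x).toNNReal :=
    (measurable_gaussianPDFReal 0 1).real_toNNReal
  have hpdf : gaussianPDF 0 1 = fun x => ((gaussianPDFReal 0 1 x).toNNReal : ENNReal) := by
    ext x; rfl
  rw [hpdf, integral_withDensity_eq_integral_smul hmeas]
  rw [div_eq_inv_mul, ← MeasureTheory.integral_const_mul]
  congr 1 with x
  rw [NNReal.smul_def, Real.coe_toNNReal _ (gaussianPDFReal_nonneg 0 1 x), smul_eq_mul]
  simp only [gaussianPDFReal]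
  push_cast
  rw [mul_one, sub_zero]
  ring_nf

section CoV
variable (p : ℝ) {n : ℕ} (hn : 1 ≤ n)

lemma sqrtn_pos {n : ℕ} (hn : 1 ≤ n) : (0:ℝ) < Real.sqrt n :=
  Real.sqrt_pos.mpr (by exact_mod_cast Nat.pos_of_ne_zero (by omega))

lemma E_hasDeriv (y : ℝ) :
    HasDerivAt (fun y : ℝ => Real.exp (y / Real.sqrt n)) (Real.exp (y / Real.sqrt n) / Real.sqrt n) y := by
  have h1 : HasDerivAt (fun y : ℝ => y / Real.sqrt n) (1 / Real.sqrt n) y := by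
    simpa using (hasDerivAt_id y).div_const (Real.sqrt n)
  simpa [div_eq_mul_inv, mul_comm, Function.comp_def] using (Real.hasDerivAt_exp (y / Real.sqrt n)).comp y h1

lemma E_inj (hn : 1 ≤ n) : Function.Injective (fun y : ℝ => Real.exp (y / Real.sqrt n)) := by
  intro a b h
  have h2 : a / Real.sqrt n = b / Real.sqrt n := Real.exp_injective h
  field_simp [(sqrtn_pos hn).ne'] at h2
  exact h2

lemma E_range (hn : 1 ≤ n) : Set.range (fun y : ℝ => Real.exp (y / Real.sqrt n)) = Set.Ioi 0 := by
  ext x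
  constructor
  · rintro ⟨y, rfl⟩; exact Real.exp_pos _
  · intro hx
    refine ⟨Real.sqrt n * Real.log x, ?_⟩
    show Real.exp (Real.sqrt n * Real.log x / Real.sqrt n) = x
    rw [mul_div_cancel_left₀ _ (sqrtn_pos hn).ne', Real.exp_log hx]

lemma integrand_eq (hn : 1 ≤ n) (y : ℝ) (φ : ℝ → ℝ) :
    |Real.exp (y / Real.sqrt n) / Real.sqrt n| •
      ((Real.exp (y / Real.sqrt n)) ^ (p - 1) *
        Real.exp (-((n:ℝ) * Real.exp (y / Real.sqrt n) + (n:ℝ) / Real.exp (y / Real.sqrt n)) / 2) *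
        φ (Real.sqrt n * Real.log (Real.exp (y / Real.sqrt n)))) =
    (Real.exp (-(n:ℝ)) / Real.sqrt n) * (φ y * HH p n y) := by
  have hs := sqrtn_pos hn
  set t := y / Real.sqrt n with ht
  have hlog : Real.sqrt n * Real.log (Real.exp t) = y := by
    rw [Real.log_exp, ht, mul_div_cancel₀ _ hs.ne']
  rw [hlog]
  have habs : |Real.exp t / Real.sqrt n| = Real.exp t / Real.sqrt n := abs_of_pos (by positivity)
  rw [habs, smul_eq_mul]
  have hrpow : (Real.exp t) ^ (p - 1) = Real.exp (t * (p - 1)) := (Real.exp_mul t (p-1)).symm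
  have hdivexp : (n:ℝ) / Real.exp t = (n:ℝ) * Real.exp (-t) := by
    rw [Real.exp_neg]; ring
  have hcosh : -((n:ℝ) * Real.exp t + (n:ℝ) * Real.exp (-t)) / 2 = -(n:ℝ) * Real.cosh t := by
    rw [Real.cosh_eq]; ring
  rw [hrpow, hdivexp, hcosh, ← Real.exp_add]
  unfold HH
  rw [← ht]
  rw [show Real.exp t / Real.sqrt n * (Real.exp (t * (p - 1) + -(n:ℝ) * Real.cosh t) * φ y)
      = (1 / Real.sqrt n) * (Real.exp t * Real.exp (t * (p - 1) + -(n:ℝ) * Real.cosh t)) * φ y by ring,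
    ← Real.exp_add]
  have ht' : p * y / Real.sqrt n = p * t := by rw [ht]; ring
  rw [ht', show t + (t * (p - 1) + -(n:ℝ) * Real.cosh t) = p * t - (n:ℝ) * Real.cosh t by ring]
  rw [show p * t - (n:ℝ) * (Real.cosh t - 1) = (p * t - (n:ℝ) * Real.cosh t) + (n:ℝ) by ring,
    Real.exp_add]
  rw [Real.exp_neg]
  field_simp
end CoV
lemma gigDensity_eq (p a : ℝ) (x : ℝ) : gigDensity p a a x = ENNReal.ofReal (DR p a x) := by
  simp only [gigDensity, DR]; split <;> simp

lemma DR_nonneg (p a x : ℝ) : 0 ≤ DR p a x := by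
  unfold DR; split
  · positivity
  · exact le_refl 0

lemma DR_meas (p a : ℝ) : Measurable (DR p a) := by
  unfold DR
  exact Measurable.ite measurableSet_Ioi (by fun_prop) measurable_const

lemma HH_integrable (p : ℝ) {n : ℕ} (hn : 1 ≤ n) : Integrable (HH p n) := by
  refine (dom_integrable p).mono' (HH_continuous p n).aestronglyMeasurable
    (ae_of_all _ fun y => ?_)
  have hpos : 0 < HH p n y := by unfold HH; exact Real.exp_pos _
  rw [Real.norm_eq_abs, abs_of_pos hpos]
  exact HH_le p hn y

lemma integrableOn_G (p : ℝ) {n : ℕ} (hn : 1 ≤ n) :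
    IntegrableOn (fun x : ℝ => x ^ (p - 1) * Real.exp (-((n:ℝ) * x + (n:ℝ) / x) / 2))
      (Set.Ioi 0) := by
  rw [← E_range hn, ← Set.image_univ,
    integrableOn_image_iff_integrableOn_abs_deriv_smul MeasurableSet.univ
      (fun y _ => (E_hasDeriv y).hasDerivWithinAt) (E_inj hn).injOn]
  rw [integrableOn_univ]
  have heq : (fun y : ℝ => |Real.exp (y / Real.sqrt n) / Real.sqrt n| •
      ((Real.exp (y / Real.sqrt n)) ^ (p - 1) *
        Real.exp (-((n:ℝ) * Real.exp (y / Real.sqrt n) + (n:ℝ) / Real.exp (y / Real.sqrt n)) / 2)))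
      = fun y => (Real.exp (-(n:ℝ)) / Real.sqrt n) * ((1:ℝ) * HH p n y) := by
    funext y
    have := integrand_eq p hn y (fun _ => (1:ℝ))
    rw [mul_one] at this
    exact this
  exact heq ▸ (((HH_integrable p hn).const_mul _).const_mul _)

lemma DR_indicator (p : ℝ) (n : ℕ) : DR p n = Set.indicator (Set.Ioi 0)
    (fun x : ℝ => x ^ (p - 1) * Real.exp (-((n:ℝ) * x + (n:ℝ) / x) / 2)) := by
  funext x
  rw [Set.indicator_apply]
  simp only [Set.mem_Ioi, DR]

lemma integrable_DR (p : ℝ) {n : ℕ} (hn : 1 ≤ n) : Integrable (DR p n) := by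
  rw [DR_indicator]
  rw [integrable_indicator_iff measurableSet_Ioi]
  exact integrableOn_G p hn

lemma Z_lt_top (p : ℝ) {n : ℕ} (hn : 1 ≤ n) :
    (volume.withDensity (gigDensity p n n)) Set.univ < ⊤ := by
  rw [withDensity_apply _ MeasurableSet.univ, Measure.restrict_univ]
  have : ∀ x, gigDensity p (n:ℝ) (n:ℝ) x = ENNReal.ofReal (DR p n x) := gigDensity_eq p n
  simp_rw [this]
  rw [← hasFiniteIntegral_iff_ofReal (ae_of_all _ (DR_nonneg p n))]
  exact (integrable_DR p hn).hasFiniteIntegral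

lemma Z_ne_zero (p : ℝ) {n : ℕ} (hn : 1 ≤ n) :
    (volume.withDensity (gigDensity p n n)) Set.univ ≠ 0 := by
  rw [withDensity_apply _ MeasurableSet.univ, Measure.restrict_univ]
  intro h
  have hmeas : Measurable (gigDensity p (n:ℝ) (n:ℝ)) := by
    have : gigDensity p (n:ℝ) (n:ℝ) = fun x => ENNReal.ofReal (DR p n x) := by
      funext x; exact gigDensity_eq p n x
    rw [this]
    exact (DR_meas p n).ennreal_ofReal
  rw [lintegral_eq_zero_iff hmeas] at h
  have hsub : Set.Ioi (0:ℝ) ⊆ {x | gigDensity p (n:ℝ) (n:ℝ) x ≠ 0} := by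
    intro x hx
    simp only [Set.mem_setOf_eq, gigDensity, if_pos (Set.mem_Ioi.mp hx)]
    have hx0 : (0:ℝ) < x := hx
    have hpos : (0:ℝ) < x ^ (p - 1) * Real.exp (-((n:ℝ) * x + (n:ℝ) / x) / 2) := by positivity
    simp only [ne_eq, ENNReal.ofReal_eq_zero, not_le]
    exact hpos
  have h0 : volume {x | gigDensity p (n:ℝ) (n:ℝ) x ≠ 0} = 0 := by
    have := h
    rw [Filter.EventuallyEq, ae_iff] at this
    simpa using this
  have := measure_mono_null hsub h0
  rw [Real.volume_Ioi] at this
  exact ENNReal.top_ne_zero this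

instance GIG_prob (p : ℝ) (n : ℕ) [NeZero n] : IsProbabilityMeasure (GIG p n n) := by
  constructor
  have hn : 1 ≤ n := Nat.one_le_iff_ne_zero.mpr (NeZero.ne n)
  rw [GIG, Measure.smul_apply, smul_eq_mul]
  exact ENNReal.inv_mul_cancel (Z_ne_zero p hn) (Z_lt_top p hn).ne

lemma key_identity (p : ℝ) {n : ℕ} (hn : 1 ≤ n) (f : BoundedContinuousFunction ℝ ℝ) :
    ∫ x, f x ∂(Measure.map (fun x => Real.sqrt n * Real.log x) (GIG p n n)) =
      (((volume.withDensity (gigDensity p (n:ℝ) (n:ℝ))) Set.univ)⁻¹).toReal *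
        ((Real.exp (-(n:ℝ)) / Real.sqrt n) * ∫ y, f y * HH p n y) := by
  have hg : Measurable (fun x : ℝ => Real.sqrt n * Real.log x) :=
    measurable_const.mul Real.measurable_log
  set ν := volume.withDensity (gigDensity p (n:ℝ) (n:ℝ)) with hν
  set Z := ν Set.univ with hZ
  have h1 : Measure.map (fun x : ℝ => Real.sqrt n * Real.log x) (GIG p n n) =
      Z⁻¹ • Measure.map (fun x : ℝ => Real.sqrt n * Real.log x) ν := by
    rw [GIG, Measure.map_smul]
  rw [h1, integral_smul_measure, smul_eq_mul]
  congr 1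
  rw [integral_map hg.aemeasurable f.continuous.aestronglyMeasurable]
  have hν2 : ν = volume.withDensity (fun x => ((DR p n x).toNNReal : ENNReal)) := by
    rw [hν]
    congr 1
    funext x
    rw [gigDensity_eq]
    rfl
  rw [hν2, integral_withDensity_eq_integral_smul (DR_meas p n).real_toNNReal]
  have h3 : (fun x => (DR p n x).toNNReal • f (Real.sqrt n * Real.log x)) =
      Set.indicator (Set.Ioi 0) (fun x : ℝ =>
        (x ^ (p - 1) * Real.exp (-((n:ℝ) * x + (n:ℝ) / x) / 2)) *
          f (Real.sqrt n * Real.log x)) := by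
    funext x
    rw [NNReal.smul_def, Real.coe_toNNReal _ (DR_nonneg p n x), smul_eq_mul,
      Set.indicator_apply]
    simp only [Set.mem_Ioi, DR]
    split <;> simp
  rw [h3, integral_indicator measurableSet_Ioi]
  rw [← E_range hn, ← Set.image_univ,
    integral_image_eq_integral_abs_deriv_smul MeasurableSet.univ
      (fun y _ => (E_hasDeriv y).hasDerivWithinAt) (E_inj hn).injOn,
    Measure.restrict_univ]
  have h4 : (fun y : ℝ => |Real.exp (y / Real.sqrt n) / Real.sqrt n| •
      ((Real.exp (y / Real.sqrt n)) ^ (p - 1) *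
        Real.exp (-((n:ℝ) * Real.exp (y / Real.sqrt n) + (n:ℝ) / Real.exp (y / Real.sqrt n)) / 2) *
        f (Real.sqrt n * Real.log (Real.exp (y / Real.sqrt n))))) =
      fun y => (Real.exp (-(n:ℝ)) / Real.sqrt n) * (f y * HH p n y) := by
    funext y
    exact integrand_eq p hn y f
  rw [h4, integral_const_mul]

lemma ratio_eq (p : ℝ) {n : ℕ} (hn : 1 ≤ n) (f : BoundedContinuousFunction ℝ ℝ) :
    ∫ x, f x ∂(Measure.map (fun x => Real.sqrt n * Real.log x) (GIG p n n)) =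
      (∫ y, f y * HH p n y) / (∫ y, HH p n y) := by
  haveI : NeZero n := ⟨by omega⟩
  have hg : Measurable (fun x : ℝ => Real.sqrt n * Real.log x) :=
    measurable_const.mul Real.measurable_log
  haveI : IsProbabilityMeasure
      (Measure.map (fun x : ℝ => Real.sqrt n * Real.log x) (GIG p n n)) :=
    Measure.isProbabilityMeasure_map hg.aemeasurable
  set C : ℝ := (((volume.withDensity (gigDensity p (n:ℝ) (n:ℝ))) Set.univ)⁻¹).toReal *
      (Real.exp (-(n:ℝ)) / Real.sqrt n) with hC
  have hk := key_identity p hn f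
  have hk1 := key_identity p hn 1
  have hone : ∫ x, (1 : BoundedContinuousFunction ℝ ℝ) x
      ∂(Measure.map (fun x => Real.sqrt n * Real.log x) (GIG p n n)) = 1 := by
    simp
  have hB : ∫ y, (1 : BoundedContinuousFunction ℝ ℝ) y * HH p n y = ∫ y, HH p n y := by
    congr 1; funext y; simp
  rw [hB] at hk1
  rw [hone] at hk1
  have hk1' : C * ∫ y, HH p n y = 1 := by rw [hC, mul_assoc]; exact hk1.symm
  have hk' : ∫ x, f x ∂(Measure.map (fun x => Real.sqrt n * Real.log x) (GIG p n n)) =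
      C * ∫ y, f y * HH p n y := by rw [hk, hC]; ring
  have hCB : C = (∫ y, HH p n y)⁻¹ := eq_inv_of_mul_eq_one_left hk1'
  rw [hk', hCB, div_eq_inv_mul]

theorem stmt_15 (p : ℝ) :
    ∀ f : BoundedContinuousFunction ℝ ℝ,
      Tendsto
        (fun n : ℕ =>
          ∫ x, f x ∂(Measure.map (fun x => Real.sqrt n * Real.log x) (GIG p n n)))
        atTop (nhds (∫ x, f x ∂(gaussianReal 0 1))) := by
  intro f
  have hnum := main_tendsto p f
  have hden : Tendsto (fun n : ℕ => ∫ y, HH p n y) atTop (nhds (Real.sqrt (2 * Real.pi))) := by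
    have h := main_tendsto p 1
    have h2 : (fun n : ℕ => ∫ y, (1 : BoundedContinuousFunction ℝ ℝ) y * HH p n y) =
        fun n : ℕ => ∫ y, HH p n y := by
      funext n; congr 1; funext y; simp
    rw [h2] at h
    have h3 : ∫ y, (1 : BoundedContinuousFunction ℝ ℝ) y * Real.exp (-(y ^ 2) / 2) =
        Real.sqrt (2 * Real.pi) := by
      rw [← gauss_int]; congr 1; funext y; simp
    rwa [h3] at h
  have hlim : Tendsto (fun n : ℕ => (∫ y, f y * HH p n y) / (∫ y, HH p n y)) atTop
      (nhds ((∫ y, f y * Real.exp (-(y ^ 2) / 2)) / Real.sqrt (2 * Real.pi))) :=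
    hnum.div hden (Real.sqrt_pos.mpr (by positivity)).ne'
  rw [gaussian_integral_eq f]
  refine hlim.congr' ?_
  filter_upwards [eventually_ge_atTop 1] with n hn
  exact (ratio_eq p hn f).symm
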